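/- arXiv:1912.09407 — 2 statements merged into one kernel-verified Lean document; each statement's English description precedes it below -/
import Mathlib

section
/- For the Lewis metric t–φ block −f dt² + 2k dt dφ + l dφ² with f, k, l, C as in the Weyl-class Lewis solution and real parameters a ≠ 0, b ≠ 0, c, n ≠ 0, the substitution φ̄ = φ + t/b (i.e., Ω = −1/b) transforms it into −f̄(dt + C̄ dφ̄)² + (r²/f̄) dφ̄² with f̄ = r^{1+n}/α, α = −a b², and C̄ = −b(n − bc)/n. -/
/-- the rigid rotation φ̄ = φ + t/b (Ω = −1/b) brings the t–φ block of
the Weyl-class Lewis metric to the canonical form −f̄(dt + C̄ dφ̄)² + (r²/f̄) dφ̄²,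
with f̄ = r^{1+n}/α, α = −ab², C̄ = −b(n−bc)/n. -/
theorem lewis_weyl_canonical_form_case_two
    (a b c n r : ℝ) (ha : a ≠ 0) (hb : b ≠ 0) (hn : n ≠ 0) (hr : 0 < r)
    (f : ℝ) (hf : f = a * r ^ (1 - n) - c ^ 2 * r ^ (n + 1) / (n ^ 2 * a))
    (hf0 : f ≠ 0)
    (C : ℝ) (hC : C = c * r ^ (n + 1) / (n * a * f) + b)
    (k l Ω Cbar α fbar : ℝ)
    (hk : k = -C * f) (hl : l = r ^ 2 / f - C ^ 2 * f)
    (hΩ : Ω = -(1 / b))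
    (hCbar : Cbar = -(b * (n - b * c) / n))
    (hα : α = -(a * b ^ 2))
    (hfbar : fbar = r ^ (1 + n) / α) :
    ∀ dt dφbar : ℝ,
      -f * dt ^ 2 + 2 * k * dt * (dφbar + Ω * dt) + l * (dφbar + Ω * dt) ^ 2
        = -fbar * (dt + Cbar * dφbar) ^ 2 + (r ^ 2 / fbar) * dφbar ^ 2 := by
  intro dt dφbar
  rw [show (1 + n) = (n + 1) by ring] at hfbar
  set u := r ^ (1 - n) with hu
  set v := r ^ (n + 1) with hv
  have hu0 : u ≠ 0 := (Real.rpow_pos_of_pos hr _).ne'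
  have hv0 : v ≠ 0 := (Real.rpow_pos_of_pos hr _).ne'
  have huv : u * v = r ^ 2 := by
    rw [hu, hv, ← Real.rpow_add hr, show (1 - n + (n + 1)) = (2:ℝ) by ring,
      ← Real.rpow_two]
  have hu2 : u = r ^ 2 / v := by rw [eq_div_iff hv0]; exact huv
  have hab : -(a * b ^ 2) ≠ 0 := by simp [ha, hb]
  have hfbar0 : fbar ≠ 0 := by
    rw [hfbar, hα]; exact div_ne_zero hv0 hab
  have hg : f = (a ^ 2 * n ^ 2 * r ^ 2 - c ^ 2 * v ^ 2) / (n ^ 2 * a * v) := by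
    rw [hf, hu2]; field_simp
  have hg0 : a ^ 2 * n ^ 2 * r ^ 2 - c ^ 2 * v ^ 2 ≠ 0 := by
    intro h; apply hf0; rw [hg, h, zero_div]
  subst hk hl hΩ hCbar hα hfbar hC
  rw [hg]
  field_simp
  ring
end

section
/- For the van Stockum interior metric functions F = 1, M = w r², L = r² − w² r⁴, H = e^{−w²r²} and the exterior ones F, M, L, H given by the van Stockum formulas with N = √(1/4 − w²R²), the four functions (F, M, L, H) of the interior and exterior solutions agree at r = R (for 0 < wR < 1/2). -/
/-- the van Stockum interior metric functions
(F, M, L, H) = (1, wr², r² − w²r⁴, e^{−w²r²}) agree at r = R with the exterior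
ones given by the van Stockum formulas with N = √(1/4 − w²R²), for 0 < wR < 1/2. -/
theorem van_stockum_matching_at_boundary
    (w R : ℝ) (hw : 0 < w) (hR : 0 < R) (hwR : w * R < 1 / 2)
    (N : ℝ) (hN : N = Real.sqrt (1 / 4 - w ^ 2 * R ^ 2))
    (Fext Mext Lext Hext Fint Mint Lint Hint : ℝ → ℝ)
    (hFext : ∀ r, Fext r =
      ((2 * N - 1) * (r / R) ^ (2 * N + 1) + (2 * N + 1) * (r / R) ^ (1 - 2 * N)) / (4 * N))
    (hMext : ∀ r, Mext r = w * R ^ 2 *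
      ((2 * N + 1) * (r / R) ^ (2 * N + 1) + (2 * N - 1) * (r / R) ^ (1 - 2 * N)) / (4 * N))
    (hLext : ∀ r, Lext r = R ^ 2 *
      ((2 * N + 1) ^ 3 * (r / R) ^ (2 * N + 1) + (2 * N - 1) ^ 3 * (r / R) ^ (1 - 2 * N)) /
        (16 * N))
    (hHext : ∀ r, Hext r = Real.exp (-(w ^ 2 * R ^ 2)) * (r / R) ^ (-(2 * w ^ 2 * R ^ 2)))
    (hFint : ∀ r, Fint r = 1)
    (hMint : ∀ r, Mint r = w * r ^ 2)
    (hLint : ∀ r, Lint r = r ^ 2 - w ^ 2 * r ^ 4)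
    (hHint : ∀ r, Hint r = Real.exp (-(w ^ 2 * r ^ 2))) :
    Fext R = Fint R ∧ Mext R = Mint R ∧ Lext R = Lint R ∧ Hext R = Hint R := by

  have hsub : (0:ℝ) < 1 / 4 - w ^ 2 * R ^ 2 := by nlinarith [mul_pos hw hR]
  have hN2 : N ^ 2 = 1 / 4 - w ^ 2 * R ^ 2 := by
    rw [hN, sq, Real.mul_self_sqrt hsub.le]
  have hNpos : 0 < N := by rw [hN]; exact Real.sqrt_pos.mpr hsub
  have hRR : R / R = 1 := div_self hR.ne'
  have h1 : ∀ x : ℝ, (R / R : ℝ) ^ x = 1 := by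
    intro x; rw [hRR, Real.one_rpow]
  refine ⟨?_, ?_, ?_, ?_⟩
  · rw [hFext, hFint, h1, h1]; field_simp; ring
  · rw [hMext, hMint, h1, h1]; field_simp; ring
  · rw [hLext, hLint, h1, h1]; field_simp; linear_combination 16 * N * hN2
  · rw [hHext, hHint, h1, mul_one]
end
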